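/- arXiv:2409.17090 — 2 statements merged into one kernel-verified Lean document; each statement's English description precedes it below -/
import Mathlib

section
/- For a single coordinate: for scalars u ∈ ℝ, s > 0, a > 0, the function g(v) = (1/(2s))(v − u)² + a·1[v ≠ 0] attains its minimum over ℝ at v = 0 if |u| ≤ √(2sa), and at v = u if |u| ≥ √(2sa); moreover min g = min{u²/(2s), a}. -/
theorem scalar_hard_threshold
    (u s a : ℝ) (hs : 0 < s) (ha : 0 < a) :
    (let g : ℝ → ℝ := fun v => (1 / (2 * s)) * (v - u) ^ 2 + (if v ≠ 0 then a else 0);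
      (|u| ≤ Real.sqrt (2 * s * a) → ∀ v : ℝ, g 0 ≤ g v) ∧
      (Real.sqrt (2 * s * a) ≤ |u| → ∀ v : ℝ, g u ≤ g v) ∧
      IsLeast (Set.range g) (min (u ^ 2 / (2 * s)) a)) := by
  intro g
  have hsa : (0:ℝ) ≤ 2 * s * a := by positivity
  have hsq : Real.sqrt (2 * s * a) ^ 2 = 2 * s * a := Real.sq_sqrt hsa
  have hg0 : g 0 = u ^ 2 / (2 * s) := by
    simp [g]; ring
  have hgne : ∀ v : ℝ, v ≠ 0 → g v = (1 / (2 * s)) * (v - u) ^ 2 + a := by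
    intro v hv; simp [g, hv]
  have hga : ∀ v : ℝ, v ≠ 0 → a ≤ g v := by
    intro v hv
    rw [hgne v hv]
    have : (0:ℝ) ≤ (1 / (2 * s)) * (v - u) ^ 2 := by positivity
    linarith
  refine ⟨?_, ?_, ?_, ?_⟩
  · intro h v
    have hu2 : u ^ 2 ≤ 2 * s * a := by nlinarith [sq_abs u, abs_nonneg u, Real.sqrt_nonneg (2*s*a)]
    by_cases hv : v = 0
    · rw [hv]
    · have := hga v hv
      rw [hg0]
      have : u ^ 2 / (2 * s) ≤ a := by
        rw [div_le_iff₀ (by positivity)]; linarith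
      exact le_trans this (hga v hv)
  · intro h v
    have hu2 : 2 * s * a ≤ u ^ 2 := by nlinarith [sq_abs u, Real.sqrt_nonneg (2*s*a), abs_nonneg u]
    by_cases hu : u = 0
    · subst hu
      by_cases hv : v = 0
      · rw [hv]
      · have h1 := hga v hv
        have h2 : g 0 = 0 := by rw [hg0]; norm_num
        rw [h2]; linarith
    · have hgu : g u = a := by rw [hgne u hu]; simp
      rw [hgu]
      by_cases hv : v = 0
      · rw [hv, hg0, le_div_iff₀ (by positivity)]; nlinarith
      · exact hga v hv
  · -- membership
    by_cases hle : u ^ 2 / (2 * s) ≤ a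
    · refine ⟨0, ?_⟩
      rw [hg0, min_eq_left hle]
    · push_neg at hle
      have hu : u ≠ 0 := by
        intro h; rw [h] at hle; simp at hle; nlinarith
      refine ⟨u, ?_⟩
      rw [hgne u hu, min_eq_right (le_of_lt hle)]; ring
  · rintro x ⟨v, rfl⟩
    by_cases hv : v = 0
    · rw [hv, hg0]; exact min_le_left _ _
    · exact le_trans (min_le_right _ _) (hga v hv)
end

section
/- Support shrinkage under small step size: let f : ℝ^n → ℝ be differentiable with ‖∇f(m)‖ ≤ G, let τ = γ min_{t ∈ C} c_t where c_t > 0 for t ∈ C, and suppose the step size satisfies s ≤ 2τ/G². If m ∈ ℝ^n satisfies m_t = 0 for some t ∈ C, then the hard-thresholded gradient step z = T_{s,γ,c}(m − s∇f(m)) also satisfies z_t = 0. Consequently supp(z) ∩ C ⊆ supp(m) ∩ C. -/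
open Finset

lemma abs_coord_le_norm_euclid {n : ℕ} (x : EuclideanSpace ℝ (Fin n)) (t : Fin n) :
    |x t| ≤ ‖x‖ := by
  rw [EuclideanSpace.norm_eq]
  have h1 : |x t| ^ 2 ≤ ∑ i, x i ^ 2 := by
    rw [sq_abs]
    exact Finset.single_le_sum (fun i _ => sq_nonneg (x i)) (Finset.mem_univ t)
  have := Real.sqrt_le_sqrt h1
  simp only [Real.norm_eq_abs, sq_abs]
  rwa [Real.sqrt_sq (abs_nonneg _)] at this

theorem support_shrinkage
    {n : ℕ} (γ s G : ℝ) (hγ : 0 < γ) (hs : 0 < s) (hG : 0 ≤ G)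
    (C : Finset (Fin n)) (hC : C.Nonempty) (c : Fin n → ℝ) (hc : ∀ t ∈ C, 0 < c t)
    (f : EuclideanSpace ℝ (Fin n) → ℝ) (g : EuclideanSpace ℝ (Fin n) → EuclideanSpace ℝ (Fin n))
    (m : EuclideanSpace ℝ (Fin n))
    (hgrad : HasGradientAt f (g m) m)
    (hGbound : ‖g m‖ ≤ G)
    (τ : ℝ) (hτ : τ = γ * C.inf' hC c)
    (hstep : s ≤ 2 * τ / G ^ 2)
    (z : EuclideanSpace ℝ (Fin n))
    (hz : ∀ t, z t =
      if t ∈ C ∧ |m t - s * g m t| ≤ Real.sqrt (2 * s * γ * c t) then 0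
      else m t - s * g m t) :
    (∀ t ∈ C, m t = 0 → z t = 0) ∧
    Function.support (fun t => z t) ∩ ↑C ⊆ Function.support (fun t => m t) ∩ ↑C := by
  have key : ∀ t ∈ C, m t = 0 → z t = 0 := by
    intro t htC hmt
    rw [hz t, if_pos]
    refine ⟨htC, ?_⟩
    rw [hmt, zero_sub, abs_neg, abs_mul, abs_of_pos hs]
    have hgt : |g m t| ≤ G := le_trans (abs_coord_le_norm_euclid (g m) t) hGbound
    have hct : 0 < c t := hc t htC
    rcases eq_or_lt_of_le hG with hG0 | hGpos
    · have hg0 : g m t = 0 := by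
        have := le_antisymm (hG0 ▸ hgt) (abs_nonneg _)
        exact abs_eq_zero.mp this
      simp [hg0, Real.sqrt_nonneg]
    · have hτle : τ ≤ γ * c t := by
        rw [hτ]
        exact mul_le_mul_of_nonneg_left (Finset.inf'_le c htC) hγ.le
      have hsG2 : s * G ^ 2 ≤ 2 * τ := by
        have := mul_le_mul_of_nonneg_right hstep (sq_nonneg G)
        rwa [div_mul_cancel₀ _ (by positivity)] at this
      rw [Real.le_sqrt (by positivity) (by nlinarith [mul_pos (mul_pos hs hγ) hct])]
      have h1 : (s * |g m t|) ^ 2 ≤ (s * G) ^ 2 := by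
        apply pow_le_pow_left₀ (by positivity)
        exact mul_le_mul_of_nonneg_left hgt hs.le
      calc (s * |g m t|) ^ 2 ≤ (s * G) ^ 2 := h1
        _ = s * (s * G ^ 2) := by ring
        _ ≤ s * (2 * τ) := by nlinarith
        _ ≤ s * (2 * (γ * c t)) := by nlinarith
        _ = 2 * s * γ * c t := by ring
  refine ⟨key, ?_⟩
  rintro t ⟨hzt, htC⟩
  simp only [Set.mem_inter_iff, Function.mem_support, Finset.mem_coe] at *
  exact ⟨fun hmt => hzt (key t htC hmt), htC⟩
end
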